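/- Let C be a Boolean algebra of group languages closed under left and right quotients, and α : A* → M a morphism into a finite monoid. For s ∈ M, s is a C-stutter for α (meaning: every finite C-cover K of α⁻¹(s) contains some K with K ∩ K·K ≠ ∅) if and only if {ε} is not C-separable from α⁻¹(s). -/

import Mathlib

open Computability

instance {α : Type*} : Union (Language α) := ⟨Set.union⟩
instance {α : Type*} : Inter (Language α) := ⟨Set.inter⟩
instance {α : Type*} : HasSubset (Language α) := ⟨fun l m => ∀ x ∈ l, x ∈ m⟩
instance {α : Type*} : EmptyCollection (Language α) := ⟨fun _ => False⟩

/-- A group language: one recognized by a morphism into a finite group (every finite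
group embeds into some symmetric group, whence this formulation). -/
def IsGroupLanguage {A : Type*} (L : Language A) : Prop :=
  ∃ (n : ℕ) (β : List A → Equiv.Perm (Fin n)) (F : Set (Equiv.Perm (Fin n))),
    β [] = 1 ∧ (∀ u v : List A, β (u ++ v) = β u * β v) ∧ L = β ⁻¹' F

namespace StutterAux

variable {A : Type*}

/-- The syntactic class of `w` relative to `K`. -/
def cls (K : Language A) (w : List A) : Language A :=
  {x | ∀ u v : List A, (u ++ x ++ v ∈ K ↔ u ++ w ++ v ∈ K)}

lemma mem_cls_self (K : Language A) (w : List A) : w ∈ cls K w := fun _ _ => Iff.rfl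

lemma sInter_mem {C : Set (Language A)}
    (hUniv : (Set.univ : Language A) ∈ C)
    (hInter : ∀ L ∈ C, ∀ L' ∈ C, L ∩ L' ∈ C)
    {S : Set (Language A)} (hS : S.Finite) (h : ∀ L ∈ S, L ∈ C) :
    (⋂₀ S : Language A) ∈ C := by
  refine Set.Finite.induction_on (motive := fun S _ => (∀ L ∈ S, L ∈ C) → (⋂₀ S : Language A) ∈ C)
    S hS ?_ ?_ h
  · intro _
    convert hUniv using 1
    exact Set.sInter_empty
  · intro a S _ _ ih h
    convert hInter _ (h _ (Set.mem_insert _ _)) _ (ih fun L hL => h _ (Set.mem_insert_of_mem _ hL)) using 2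
    exact Iff.of_eq (congrArg (fun x : Language A => x ∈ C) (Set.sInter_insert a S))

lemma quot_mem {C : Set (Language A)}
    (hQuotL : ∀ L ∈ C, ∀ w : List A, ({u | w ++ u ∈ L} : Language A) ∈ C)
    (hQuotR : ∀ L ∈ C, ∀ w : List A, ({u | u ++ w ∈ L} : Language A) ∈ C)
    {K : Language A} (hK : K ∈ C) (u v : List A) :
    ({x | u ++ x ++ v ∈ K} : Language A) ∈ C := by
  have h1 : ({y | y ++ v ∈ K} : Language A) ∈ C := hQuotR K hK v
  have h2 := hQuotL _ h1 u
  have he : ({x | u ++ x ∈ ({y | y ++ v ∈ K} : Language A)} : Language A)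
      = ({x | u ++ x ++ v ∈ K} : Language A) := by
    apply Set.ext
    intro x
    show (u ++ x) ++ v ∈ K ↔ u ++ x ++ v ∈ K
    rw [List.append_assoc]
  replace h2 : ({x | u ++ x ++ v ∈ K} : Language A) ∈ C := h2
  exact h2

lemma cls_mem {C : Set (Language A)}
    (hUniv : (Set.univ : Language A) ∈ C)
    (hCompl : ∀ L ∈ C, Lᶜ ∈ C)
    (hInter : ∀ L ∈ C, ∀ L' ∈ C, L ∩ L' ∈ C)
    (hQuotL : ∀ L ∈ C, ∀ w : List A, ({u | w ++ u ∈ L} : Language A) ∈ C)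
    (hQuotR : ∀ L ∈ C, ∀ w : List A, ({u | u ++ w ∈ L} : Language A) ∈ C)
    {K : Language A} (hK : K ∈ C)
    {n : ℕ} {β : List A → Equiv.Perm (Fin n)} {F : Set (Equiv.Perm (Fin n))}
    (hβm : ∀ u v : List A, β (u ++ v) = β u * β v) (hKF : K = β ⁻¹' F) (w : List A) :
    cls K w ∈ C := by
  classical
  have memK : ∀ a b c : List A, (a ++ b ++ c ∈ K ↔ β a * β b * β c ∈ F) := by
    intro a b c
    rw [hKF]
    show β (a ++ b ++ c) ∈ F ↔ _
    rw [hβm, hβm]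
  set Q : List A → List A → Language A :=
    fun u v => {x | u ++ x ++ v ∈ K ↔ u ++ w ++ v ∈ K} with hQdef
  set Q' : Equiv.Perm (Fin n) × Equiv.Perm (Fin n) → Language A :=
    fun p => {x | p.1 * β x * p.2 ∈ F ↔ p.1 * β w * p.2 ∈ F} with hQ'def
  have hQQ' : ∀ u v : List A, Q u v = Q' (β u, β v) := by
    intro u v
    apply Set.ext
    intro x
    show (u ++ x ++ v ∈ K ↔ u ++ w ++ v ∈ K) ↔ _
    rw [memK u x v, memK u w v]
    exact Iff.rfl
  have hQmem : ∀ u v : List A, Q u v ∈ C := by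
    intro u v
    by_cases h : u ++ w ++ v ∈ K
    · have : Q u v = ({x | u ++ x ++ v ∈ K} : Language A) := by
        apply Set.ext; intro x; simp only [hQdef, Set.mem_setOf_eq, iff_true, h]
      rw [this]; exact quot_mem hQuotL hQuotR hK u v
    · have : Q u v = ({x | u ++ x ++ v ∈ K} : Language A)ᶜ := by
        apply Set.ext; intro x
        simp only [hQdef, Set.mem_setOf_eq, Set.mem_compl_iff, iff_false, h]
      rw [this]; exact hCompl _ (quot_mem hQuotL hQuotR hK u v)
  have hT : {L : Language A | ∃ u v : List A, L = Q u v}.Finite := by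
    apply Set.Finite.subset (Set.finite_range Q')
    rintro L ⟨u, v, rfl⟩
    exact ⟨(β u, β v), (hQQ' u v).symm⟩
  have hcls : cls K w = ⋂₀ {L : Language A | ∃ u v : List A, L = Q u v} := by
    apply Set.ext
    intro x
    constructor
    · rintro hx L ⟨u, v, rfl⟩
      exact hx u v
    · intro hx u v
      exact hx (Q u v) ⟨u, v, rfl⟩
  rw [hcls]
  exact sInter_mem hUniv hInter hT (by rintro L ⟨u, v, rfl⟩; exact hQmem u v)

lemma cls_eq_of_group {K : Language A}
    {n : ℕ} {β : List A → Equiv.Perm (Fin n)} {F : Set (Equiv.Perm (Fin n))}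
    (hβm : ∀ u v : List A, β (u ++ v) = β u * β v) (hKF : K = β ⁻¹' F) (w : List A) :
    cls K w = (fun g : Equiv.Perm (Fin n) =>
      ({x | ∀ u v : List A, (u ++ x ++ v ∈ K ↔ β u * g * β v ∈ F)} : Language A)) (β w) := by
  apply Set.ext
  intro x
  show (∀ u v : List A, _) ↔ (∀ u v : List A, _)
  refine forall_congr' fun u => forall_congr' fun v => ?_
  have : (u ++ w ++ v ∈ K) ↔ β u * β w * β v ∈ F := by
    rw [hKF]
    show β (u ++ w ++ v) ∈ F ↔ _
    rw [hβm, hβm]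
  rw [this]

end StutterAux
/-- For a quotient-closed Boolean algebra `C` of group languages and a morphism
`α : A* → M` into a finite monoid, `s` is a `C`-stutter iff `{ε}` is not
`C`-separable from `α⁻¹(s)`. -/
theorem stutter_iff_not_separable {A M : Type*} [Monoid M] [Finite M]
    (C : Set (Language A)) (hGL : ∀ L ∈ C, IsGroupLanguage L)
    (hUniv : (Set.univ : Language A) ∈ C)
    (hCompl : ∀ L ∈ C, Lᶜ ∈ C)
    (hUnion : ∀ L ∈ C, ∀ L' ∈ C, L ∪ L' ∈ C)
    (hInter : ∀ L ∈ C, ∀ L' ∈ C, L ∩ L' ∈ C)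
    (hQuotL : ∀ L ∈ C, ∀ w : List A, ({u | w ++ u ∈ L} : Language A) ∈ C)
    (hQuotR : ∀ L ∈ C, ∀ w : List A, ({u | u ++ w ∈ L} : Language A) ∈ C)
    (α : List A → M) (hα1 : α [] = 1) (hαm : ∀ u v : List A, α (u ++ v) = α u * α v)
    (s : M) :
    (∀ Kc : Finset (Language A), (∀ K ∈ Kc, K ∈ C) →
        (∀ w : List A, α w = s → ∃ K ∈ Kc, w ∈ K) →
        ∃ K ∈ Kc, ∃ w : List A, w ∈ K ∩ (K * K)) ↔
      ¬ ∃ K ∈ C, [] ∈ K ∧ K ∩ ({w | α w = s} : Language A) = (∅ : Language A) := by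
  classical
  constructor
  · -- stutter → not separable
    rintro hstut ⟨K, hKC, hKe, hdisj⟩
    obtain ⟨n, β, F, hβ1, hβm, hKF⟩ := hGL K hKC
    -- the cover by syntactic classes of words in α⁻¹(s)
    have hSfin : {L : Language A | ∃ w : List A, α w = s ∧ L = StutterAux.cls K w}.Finite := by
      apply Set.Finite.subset (Set.finite_range (fun g : Equiv.Perm (Fin n) =>
        ({x | ∀ u v : List A, (u ++ x ++ v ∈ K ↔ β u * g * β v ∈ F)} : Language A)))
      rintro L ⟨w, _, rfl⟩
      exact ⟨β w, (StutterAux.cls_eq_of_group hβm hKF w).symm⟩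
    obtain ⟨K', hK'Kc, x, hx1, hx2⟩ := hstut hSfin.toFinset
      (by
        intro K' hK'
        rw [Set.Finite.mem_toFinset] at hK'
        obtain ⟨w, _, rfl⟩ := hK'
        exact StutterAux.cls_mem hUniv hCompl hInter hQuotL hQuotR hKC hβm hKF w)
      (by
        intro w hw
        exact ⟨StutterAux.cls K w, Set.Finite.mem_toFinset hSfin |>.mpr ⟨w, hw, rfl⟩,
          StutterAux.mem_cls_self K w⟩)
    rw [Set.Finite.mem_toFinset] at hK'Kc
    obtain ⟨w₀, hw₀s, rfl⟩ := hK'Kc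
    replace hx2 := Language.mem_mul.mp hx2
    obtain ⟨a, ha, b, hb, rfl⟩ := hx2
    -- ha hb : a,b ∈ cls K w₀ ; hx1 : a ++ b ∈ cls K w₀
    have hsq : ∀ u v : List A, (u ++ (w₀ ++ w₀) ++ v ∈ K ↔ u ++ w₀ ++ v ∈ K) := by
      intro u v
      calc u ++ (w₀ ++ w₀) ++ v ∈ K
          ↔ (u ++ w₀) ++ b ++ v ∈ K := by
            have h1 := hb (u ++ w₀) v
            constructor <;> intro h
            · exact h1.mpr (by simpa [List.append_assoc] using h)
            · simpa [List.append_assoc] using h1.mp h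
        _ ↔ (u ++ a) ++ b ++ v ∈ K := by
            have h1 := ha u (b ++ v)
            constructor <;> intro h
            · have : u ++ w₀ ++ (b ++ v) ∈ K := by simpa [List.append_assoc] using h
              have := h1.mpr this
              simpa [List.append_assoc] using this
            · have : u ++ a ++ (b ++ v) ∈ K := by simpa [List.append_assoc] using h
              have := h1.mp this
              simpa [List.append_assoc] using this
        _ ↔ u ++ (a ++ b) ++ v ∈ K := by
            constructor <;> intro h <;> simpa [List.append_assoc] using h
        _ ↔ u ++ w₀ ++ v ∈ K := hx1 u v
    -- powers of w₀
    have key : ∀ k : ℕ, ∃ z : List A, β z = (β w₀) ^ (k + 1) ∧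
        (∀ u v : List A, (u ++ z ++ v ∈ K ↔ u ++ w₀ ++ v ∈ K)) := by
      intro k
      induction k with
      | zero => exact ⟨w₀, by rw [pow_one], fun u v => Iff.rfl⟩
      | succ k ih =>
          obtain ⟨z, hz, hrel⟩ := ih
          refine ⟨w₀ ++ z, ?_, ?_⟩
          · rw [hβm, hz, pow_succ' (β w₀) (k + 1), pow_succ']
          · intro u v
            calc u ++ (w₀ ++ z) ++ v ∈ K
                ↔ (u ++ w₀) ++ z ++ v ∈ K := by
                  constructor <;> intro h <;> simpa [List.append_assoc] using h
              _ ↔ (u ++ w₀) ++ w₀ ++ v ∈ K := hrel (u ++ w₀) v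
              _ ↔ u ++ (w₀ ++ w₀) ++ v ∈ K := by
                  constructor <;> intro h <;> simpa [List.append_assoc] using h
              _ ↔ u ++ w₀ ++ v ∈ K := hsq u v
    obtain ⟨z, hz, hrel⟩ := key (orderOf (β w₀) - 1)
    have hord : orderOf (β w₀) - 1 + 1 = orderOf (β w₀) :=
      Nat.succ_pred_eq_of_pos (orderOf_pos _)
    have hz1 : β z = 1 := by rw [hz, hord, pow_orderOf_eq_one]
    have hzK : z ∈ K := by
      have he : ([] : List A) ∈ β ⁻¹' F := by rw [← hKF]; exact hKe
      have h1F : (1 : Equiv.Perm (Fin n)) ∈ F := by rw [← hβ1]; exact he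
      rw [hKF]; show β z ∈ F; rw [hz1]; exact h1F
    have hw₀K : w₀ ∈ K := by
      have := (hrel [] []).mp (by simpa using hzK)
      simpa using this
    have : w₀ ∈ K ∩ ({w | α w = s} : Language A) := ⟨hw₀K, hw₀s⟩
    rw [hdisj] at this
    exact this
  · -- not separable → stutter
    intro hnsep Kc hKcC hcover
    by_contra h2
    push_neg at h2
    refine hnsep ⟨⋂₀ ((fun K => StutterAux.cls K []) '' (↑Kc : Set (Language A))), ?_, ?_, ?_⟩
    · apply StutterAux.sInter_mem hUniv hInter (Kc.finite_toSet.image _)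
      rintro L ⟨K, hK, rfl⟩
      obtain ⟨n, β, F, hβ1, hβm, hKF⟩ := hGL K (hKcC K hK)
      exact StutterAux.cls_mem hUniv hCompl hInter hQuotL hQuotR (hKcC K hK) hβm hKF []
    · rintro L ⟨K, hK, rfl⟩
      exact StutterAux.mem_cls_self K []
    · apply Set.eq_empty_iff_forall_notMem.mpr
      rintro x ⟨hxE, hxs⟩
      obtain ⟨K, hKKc, hxK⟩ := hcover x hxs
      have hxcls : x ∈ StutterAux.cls K [] := hxE _ ⟨K, hKKc, rfl⟩
      have hxx : x ++ x ∈ K := by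
        have := (hxcls x []).mpr (by simpa using hxK)
        simpa using this
      exact h2 K hKKc (x ++ x) ⟨hxx, Language.mem_mul.mpr ⟨x, hxK, x, hxK, rfl⟩⟩
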